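/- For all integers k ≥ 3 and n ≥ m ≥ 2, R(C^k_n, C^k_m) ≥ (k-1)n + ⌊(m-1)/2⌋, i.e., there is a red-blue coloring of the complete k-uniform hypergraph on (k-1)n + ⌊(m-1)/2⌋ - 1 vertices with no red C^k_n and no blue C^k_m. -/

import Mathlib

open Finset

/-- Edge `i` (0-indexed) of the `k`-uniform loose cycle with `n` edges, under the embedding `f`
of its canonical vertex set `ZMod (n*(k-1))`. -/
def cycEdge (k n : ℕ) {V : Type} [DecidableEq V] (f : ZMod (n * (k - 1)) → V) (i : ℕ) :
    Finset V :=
  (Finset.range k).image fun t => f ((i * (k - 1) + t : ℕ) : ZMod (n * (k - 1)))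

/-- `f` embeds a loose cycle `C^k_n` all of whose edges satisfy `P`. -/
def IsLooseCycle (k n : ℕ) {V : Type} [DecidableEq V] (P : Finset V → Prop)
    (f : ZMod (n * (k - 1)) → V) : Prop :=
  Function.Injective f ∧ ∀ i < n, P (cycEdge k n f i)

/-- There is a copy of the loose cycle `C^k_n` all of whose edges satisfy `P`. -/
def HasLooseCycle (k n : ℕ) {V : Type} [DecidableEq V] (P : Finset V → Prop) : Prop :=
  ∃ f, IsLooseCycle k n P f

/-- Edge `i` (0-indexed) of a loose path under the vertex assignment `f`. -/
def pathEdge (k : ℕ) {V : Type} [DecidableEq V] (f : ℕ → V) (i : ℕ) : Finset V :=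
  (Finset.range k).image fun t => f (i * (k - 1) + t)

/-- There is a copy of the loose path `P^k_n` all of whose edges satisfy `P`. -/
def HasLoosePath (k n : ℕ) {V : Type} [DecidableEq V] (P : Finset V → Prop) : Prop :=
  ∃ f : ℕ → V, Set.InjOn f (Set.Iic (n * (k - 1))) ∧ ∀ i < n, P (pathEdge k f i)

/-- Every red/blue colouring of `K^k_N` contains a red `C^k_n` or a blue `C^k_m`. -/
def cycCycArrow (k n m N : ℕ) : Prop :=
  ∀ c : Finset (Fin N) → Bool,
    HasLooseCycle k n (fun e => c e = true) ∨ HasLooseCycle k m (fun e => c e = false)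

/-- Every red/blue colouring of `K^k_N` contains a red `P^k_n` or a blue `P^k_m`. -/
def pathPathArrow (k n m N : ℕ) : Prop :=
  ∀ c : Finset (Fin N) → Bool,
    HasLoosePath k n (fun e => c e = true) ∨ HasLoosePath k m (fun e => c e = false)

/-- Every red/blue colouring of `K^k_N` contains a red `P^k_n` or a blue `C^k_m`. -/
def pathCycArrow (k n m N : ℕ) : Prop :=
  ∀ c : Finset (Fin N) → Bool,
    HasLoosePath k n (fun e => c e = true) ∨ HasLooseCycle k m (fun e => c e = false)

/-- Every red/blue colouring of `K^k_N` contains a red `C^k_n` or a blue `P^k_m`. -/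
def cycPathArrow (k n m N : ℕ) : Prop :=
  ∀ c : Finset (Fin N) → Bool,
    HasLooseCycle k n (fun e => c e = true) ∨ HasLoosePath k m (fun e => c e = false)

/-- `r = R(C^k_n, C^k_m)`. -/
def cycCycRamsey (k n m r : ℕ) : Prop := IsLeast {N | cycCycArrow k n m N} r

/-- `r = R(P^k_n, P^k_m)`. -/
def pathPathRamsey (k n m r : ℕ) : Prop := IsLeast {N | pathPathArrow k n m N} r

/-- `r = R(P^k_n, C^k_m)`. -/
def pathCycRamsey (k n m r : ℕ) : Prop := IsLeast {N | pathCycArrow k n m N} r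

/-- `r = R(C^k_n, P^k_m)`. -/
def cycPathRamsey (k n m r : ℕ) : Prop := IsLeast {N | cycPathArrow k n m N} r

/-- For `k ≥ 3` and `n ≥ m ≥ 2`, `R(C^k_n, C^k_m) ≥ (k-1)n + ⌊(m-1)/2⌋`:
there is a colouring of `K^k_{(k-1)n + ⌊(m-1)/2⌋ - 1}` with no red `C^k_n` and no blue
`C^k_m`. -/
theorem ramsey_loose_cycle_lower_bound (k n m : ℕ) (hk : 3 ≤ k) (hm : 2 ≤ m) (hnm : m ≤ n) :
    ∃ c : Finset (Fin ((k - 1) * n + (m - 1) / 2 - 1)) → Bool,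
      ¬ HasLooseCycle k n (fun e => c e = true) ∧
      ¬ HasLooseCycle k m (fun e => c e = false) := by
  have hk1 : 2 ≤ k - 1 := by omega
  have hkn : 3 ≤ (k - 1) * n := by nlinarith
  set A : ℕ := (k - 1) * n - 1 with hA
  set N : ℕ := (k - 1) * n + (m - 1) / 2 - 1 with hN
  have hNA : N = A + (m - 1) / 2 := by omega
  refine ⟨fun e => decide (∀ x ∈ e, x.val < A), ?_, ?_⟩
  · -- no red cycle
    rintro ⟨f, hinj, hedges⟩
    haveI : NeZero (n * (k - 1)) := ⟨Nat.mul_ne_zero (by omega) (by omega)⟩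
    have hall : ∀ x : ZMod (n * (k - 1)), (f x).val < A := by
      intro x
      have hvx : x.val < n * (k - 1) := ZMod.val_lt x
      have hi : x.val / (k - 1) < n := (Nat.div_lt_iff_lt_mul (by omega)).2 (by omega)
      have hedge := hedges _ hi
      have hmem : f x ∈ cycEdge k n f (x.val / (k - 1)) := by
        refine Finset.mem_image.2 ⟨x.val % (k - 1), Finset.mem_range.2 ?_, ?_⟩
        · have := Nat.mod_lt x.val (show 0 < k - 1 by omega); omega
        · congr 1
          rw [Nat.div_add_mod']
          exact ZMod.natCast_rightInverse x
      simp only [decide_eq_true_eq] at hedge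
      exact hedge _ hmem
    have hApos : 0 < A := by omega
    have hcard : n * (k - 1) ≤ A := by
      calc n * (k - 1) = Fintype.card (ZMod (n * (k - 1))) := (ZMod.card _).symm
        _ ≤ Fintype.card (Fin A) := Fintype.card_le_of_injective
            (fun x : ZMod (n * (k - 1)) => (⟨(f x).val, hall x⟩ : Fin A))
            (fun x y hxy => hinj (Fin.ext (by
              simpa using congrArg Fin.val hxy)))
        _ = A := Fintype.card_fin A
    have hcomm : n * (k - 1) = (k - 1) * n := Nat.mul_comm _ _
    omega
  · -- no blue cycle
    rintro ⟨f, hinj, hedges⟩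
    haveI : NeZero (m * (k - 1)) := ⟨Nat.mul_ne_zero (by omega) (by omega)⟩
    have key : ∀ i : Fin m, ∃ t, t < k ∧
        A ≤ (f (((i : ℕ) * (k - 1) + t : ℕ) : ZMod (m * (k - 1)))).val := by
      intro i
      have hedge := hedges i i.isLt
      simp only [decide_eq_false_iff_not] at hedge
      push_neg at hedge
      obtain ⟨y, hy, hyA⟩ := hedge
      obtain ⟨t, ht, rfl⟩ := Finset.mem_image.1 hy
      exact ⟨t, Finset.mem_range.1 ht, hyA⟩
    choose t ht hB using key
    set g : Fin m → Fin N :=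
      fun i => f (((i : ℕ) * (k - 1) + t i : ℕ) : ZMod (m * (k - 1))) with hg
    set B : Finset (Fin N) := Finset.univ.filter (fun y => A ≤ y.val) with hBdef
    have hBcard : B.card ≤ (m - 1) / 2 := by
      have hle : B.card ≤ (Finset.range ((m - 1) / 2)).card := by
        apply Finset.card_le_card_of_injOn (fun y => y.val - A)
        · intro y hy
          simp only [hBdef, Finset.coe_filter, Set.mem_setOf_eq] at hy
          have hyN := y.isLt
          exact Finset.mem_range.2 (show y.val - A < (m - 1) / 2 by omega)
        · intro y hy z hz hyz
          simp only [hBdef, Finset.coe_filter, Set.mem_setOf_eq] at hy hz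
          have h1 : (y : ℕ) - A = (z : ℕ) - A := hyz
          exact Fin.ext (by omega)
      simpa using hle
    have hmaps : ∀ i ∈ (Finset.univ : Finset (Fin m)), g i ∈ B := by
      intro i _
      rw [hBdef, Finset.mem_filter]
      exact ⟨Finset.mem_univ _, hB i⟩
    have hmul : B.card * 2 < (Finset.univ : Finset (Fin m)).card := by
      rw [Finset.card_univ, Fintype.card_fin]; omega
    obtain ⟨b, hb, hfib⟩ :=
      Finset.exists_lt_card_fiber_of_mul_lt_card_of_maps_to hmaps hmul
    have hne : ({x ∈ (Finset.univ : Finset (Fin m)) | g x = b}).Nonempty :=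
      Finset.card_pos.1 (by omega)
    obtain ⟨i0, hi0⟩ := hne
    set v : ℕ := (((i0 : ℕ) * (k - 1) + t i0 : ℕ) : ZMod (m * (k - 1))).val with hv
    set S : Finset ℕ := {v / (k - 1), if v = 0 then m - 1 else v / (k - 1) - 1} with hS
    have hsub : ∀ i ∈ ({x ∈ (Finset.univ : Finset (Fin m)) | g x = b}), (i : ℕ) ∈ S := by
      intro i hi
      have hib : g i = b := (Finset.mem_filter.1 hi).2
      have hi0b : g i0 = b := (Finset.mem_filter.1 hi0).2
      have hxeq : (((i : ℕ) * (k - 1) + t i : ℕ) : ZMod (m * (k - 1)))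
          = (((i0 : ℕ) * (k - 1) + t i0 : ℕ) : ZMod (m * (k - 1))) :=
        hinj (hib.trans hi0b.symm)
      have hveq : ((i : ℕ) * (k - 1) + t i) % (m * (k - 1)) = v := by
        rw [hv, ← ZMod.val_natCast, hxeq]
      have htk : t i < k := ht i
      have him : (i : ℕ) < m := i.isLt
      have hsle : (i : ℕ) * (k - 1) + t i ≤ m * (k - 1) := by
        have h1 : (i : ℕ) * (k - 1) ≤ (m - 1) * (k - 1) :=
          Nat.mul_le_mul_right _ (by omega)
        have h2 : (m - 1) * (k - 1) + (k - 1) = m * (k - 1) := by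
          cases m with
          | zero => omega
          | succ m' => simp [Nat.succ_sub_one]; ring
        omega
      have hMpos : 0 < m * (k - 1) := Nat.pos_of_ne_zero (Nat.mul_ne_zero (by omega) (by omega))
      rcases lt_or_eq_of_le hsle with hlt | heq
      · have hvs : v = (i : ℕ) * (k - 1) + t i := by
          rw [← hveq, Nat.mod_eq_of_lt hlt]
        have hile : (i : ℕ) ≤ v / (k - 1) :=
          Nat.le_div_iff_mul_le (show 0 < k - 1 by omega) |>.2 (by omega)
        have hdle : v / (k - 1) ≤ (i : ℕ) + 1 := by
          have h1 : v ≤ ((i : ℕ) + 1) * (k - 1) := by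
            have h2 : ((i : ℕ) + 1) * (k - 1) = (i : ℕ) * (k - 1) + (k - 1) := by ring
            omega
          calc v / (k - 1) ≤ ((i : ℕ) + 1) * (k - 1) / (k - 1) := Nat.div_le_div_right h1
            _ = (i : ℕ) + 1 := Nat.mul_div_cancel _ (by omega)
        have hv0 : v = 0 → v / (k - 1) = 0 := by intro h; simp [h]
        rw [hS]
        simp only [Finset.mem_insert, Finset.mem_singleton]
        split_ifs with h0
        · have := hv0 h0; omega
        · omega
      · have hv0 : v = 0 := by rw [← hveq, heq, Nat.mod_self]
        have him1 : (i : ℕ) = m - 1 := by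
          have h2 : (m - 1) * (k - 1) + (k - 1) = m * (k - 1) := by
            cases m with
            | zero => omega
            | succ m' => simp [Nat.succ_sub_one]; ring
          have h1 : (m - 1) * (k - 1) ≤ (i : ℕ) * (k - 1) := by omega
          have h3 : m - 1 ≤ (i : ℕ) := Nat.le_of_mul_le_mul_right
            (by rwa [Nat.mul_comm (m - 1), Nat.mul_comm (i : ℕ)] at h1) (by omega)
          omega
        rw [hS]
        simp only [Finset.mem_insert, Finset.mem_singleton, if_pos hv0]
        right; exact him1
    have hScard : S.card ≤ 2 := by
      rw [hS]
      exact (Finset.card_insert_le _ _).trans (by simp)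
    have himg : ({x ∈ (Finset.univ : Finset (Fin m)) | g x = b}).card ≤ S.card := by
      have := Finset.card_le_card_of_injOn (fun x : Fin m => (x : ℕ)) hsub
        (fun x _ y _ h => Fin.ext h)
      exact this
    omega
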